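/- Let τ be the cyclic permutation b ↦ c ↦ d ↦ b of {b,c,d}. For each ξ ∈ {b,c,d}, the function [ξ] : G → 𝔽₂ defined recursively by [ξ](g) = 1 if g = ξ; [ξ](g) = 0 if g ∈ {1,a,b,c,d} but g ≠ ξ; and [ξ](g) = [ξ^τ](g|₀) + [ξ^τ](g|₁) otherwise, is well-defined (the recursion terminates for every g ∈ G) and is a group homomorphism from G to the additive group of the field 𝔽₂ with two elements. -/

import Mathlib

open Equiv

/-! ## The binary rooted tree and the twisted twin of the Grigorchuk group

We identify the vertex set of the infinite rooted binary tree with `V = List Bool`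
(the free monoid `X*` on `X = {0,1}`), and realize automorphisms of the tree as
permutations of `V`.  The generators `a, b, c, d` of the twisted twin `G` of the
Grigorchuk group are defined by the recursive rules
`a(xw) = (¬x)w`, `ψ(b) = (c,a)`, `ψ(c) = (a,d)`, `ψ(d) = (1,b)`. -/

abbrev V : Type := List Bool

def actA : V → V
  | [] => []
  | x :: w => (!x) :: w

theorem actA_invol : Function.Involutive actA := fun w => by
  cases w with
  | nil => rfl
  | cons x w => simp [actA]

mutual
  def actB : V → V
    | [] => []
    | false :: w => false :: actC w
    | true :: w => true :: actA w
  def actC : V → V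
    | [] => []
    | false :: w => false :: actA w
    | true :: w => true :: actD w
  def actD : V → V
    | [] => []
    | false :: w => false :: w
    | true :: w => true :: actB w
end

theorem act_invol3 (w : V) :
    actB (actB w) = w ∧ actC (actC w) = w ∧ actD (actD w) = w := by
  induction w with
  | nil => exact ⟨rfl, rfl, rfl⟩
  | cons x w ih =>
    cases x <;>
      exact ⟨by simp [actB, actC, actD, ih.1, ih.2.1, ih.2.2, actA_invol w],
        by simp [actB, actC, actD, ih.1, ih.2.1, ih.2.2, actA_invol w],
        by simp [actB, actC, actD, ih.1, ih.2.1, ih.2.2, actA_invol w]⟩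

theorem actB_invol : Function.Involutive actB := fun w => (act_invol3 w).1
theorem actC_invol : Function.Involutive actC := fun w => (act_invol3 w).2.1
theorem actD_invol : Function.Involutive actD := fun w => (act_invol3 w).2.2

/-- The generator `a`: the root swap. -/
def a : Perm V := actA_invol.toPerm actA
/-- The generator `b`, with `ψ(b) = (c, a)`. -/
def b : Perm V := actB_invol.toPerm actB
/-- The generator `c`, with `ψ(c) = (a, d)`. -/
def c : Perm V := actC_invol.toPerm actC
/-- The generator `d`, with `ψ(d) = (1, b)`. -/
def d : Perm V := actD_invol.toPerm actD

@[simp] theorem coe_a : ⇑a = actA := rfl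
@[simp] theorem coe_b : ⇑b = actB := rfl
@[simp] theorem coe_c : ⇑c = actC := rfl
@[simp] theorem coe_d : ⇑d = actD := rfl

/-- The twisted twin of the Grigorchuk group. -/
def G : Subgroup (Perm V) := Subgroup.closure {a, b, c, d}

theorem a_mem_G : a ∈ G := Subgroup.subset_closure (by simp)
theorem b_mem_G : b ∈ G := Subgroup.subset_closure (by simp)
theorem c_mem_G : c ∈ G := Subgroup.subset_closure (by simp)
theorem d_mem_G : d ∈ G := Subgroup.subset_closure (by simp)

/-- `hasState g v s` says that the state (section) of `g` at the vertex `v` is `s`,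
i.e. `g (v ++ w) = g v ++ s w` for all `w`. -/
def hasState (g : Perm V) (v : V) (s : Perm V) : Prop :=
  ∀ w : V, g (v ++ w) = g v ++ s w

def vstarFun (v : V) (f : V → V) : V → V :=
  fun w => if v <+: w then v ++ f (w.drop v.length) else w

theorem vstarFun_comp (v : V) (f f' : V → V) (w : V) :
    vstarFun v f (vstarFun v f' w) = vstarFun v (f ∘ f') w := by
  by_cases h : v <+: w
  · obtain ⟨t, rfl⟩ := h
    simp [vstarFun, List.prefix_append, List.drop_left]
  · simp [vstarFun, h]

theorem vstarFun_id (v w : V) : vstarFun v id w = w := by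
  by_cases h : v <+: w
  · obtain ⟨t, rfl⟩ := h
    simp [vstarFun, List.prefix_append, List.drop_left]
  · simp [vstarFun, h]

/-- `vstar v g` is the automorphism `v * g`, acting as `g` on the subtree rooted
at `v` and trivially elsewhere. -/
def vstar (v : V) (g : Perm V) : Perm V where
  toFun := vstarFun v g
  invFun := vstarFun v g.symm
  left_inv := fun w => by
    rw [vstarFun_comp, Equiv.symm_comp_self]
    exact vstarFun_id v w
  right_inv := fun w => by
    rw [vstarFun_comp, Equiv.self_comp_symm]
    exact vstarFun_id v w

/-- `XstarSub n H` is the subgroup `Xⁿ * H`: the product of the copies `v * H`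
over all vertices `v` of level `n` (equivalently, the subgroup they generate). -/
def XstarSub (n : ℕ) (H : Subgroup (Perm V)) : Subgroup (Perm V) :=
  Subgroup.closure {p | ∃ v : V, ∃ g : Perm V, v.length = n ∧ g ∈ H ∧ p = vstar v g}

/-- `pairPerm s₀ s₁ = ψ⁻¹(s₀, s₁)`: the first-level stabilizer element whose states
at the vertices `0` and `1` are `s₀` and `s₁`. -/
def pairPerm (s₀ s₁ : Perm V) : Perm V := vstar [false] s₀ * vstar [true] s₁

/-- The permutations fixing every vertex of level `n`. -/
def stabLevel (n : ℕ) : Subgroup (Perm V) where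
  carrier := {g : Perm V | ∀ v : V, v.length = n → g v = v}
  one_mem' := fun _ _ => rfl
  mul_mem' := by
    intro g h hg hh v hv
    show g (h v) = v
    rw [hh v hv, hg v hv]
  inv_mem' := by
    intro g hg v hv
    show g⁻¹ v = v
    conv_lhs => rw [← hg v hv]
    exact g.symm_apply_apply v

/-- The `n`-th level stabilizer `Stab_G(n)` of `G`. -/
def stabG (n : ℕ) : Subgroup (Perm V) := G ⊓ stabLevel n

/-- The commutator `[x, y] = x⁻¹ y⁻¹ x y` (paper convention). -/
def pc (x y : Perm V) : Perm V := x⁻¹ * y⁻¹ * x * y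
/-- Conjugation `xʸ = y⁻¹ x y`. -/
def cj (x y : Perm V) : Perm V := y⁻¹ * x * y

/-- The normal closure in `G` of a subset `S` of `G`. -/
def ncl (S : Set (Perm V)) : Subgroup (Perm V) :=
  Subgroup.closure {x | ∃ s ∈ S, ∃ g ∈ G, x = g⁻¹ * s * g}

/-- `K = ⟨[a,b],[b,c],[b,d],[c,d], bcd⟩^G`. -/
def K : Subgroup (Perm V) := ncl {pc a b, pc b c, pc b d, pc c d, b * c * d}

/-- The subgroup `[K, G]`. -/
def KG : Subgroup (Perm V) := ⁅K, G⁆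

/-- The subgroup `C`, generated by `[K,G]` and `[a,b][b,c]`. -/
def Csub : Subgroup (Perm V) := KG ⊔ Subgroup.closure {pc a b * pc b c}

/-- `γ_n(G)`, the `n`-th term of the lower central series of `G` (starting at `γ₁ = G`),
viewed as a subgroup of `Perm V`. -/
def gammaG (n : ℕ) : Subgroup (Perm V) :=
  Subgroup.map G.subtype (Subgroup.lowerCentralSeries (⊤ : Subgroup ↥G) (n - 1))


/-- The generators `b, c, d`, on which the cyclic permutation `τ` acts as `i ↦ i + 1`. -/
def genBCD : Fin 3 → Perm V := ![b, c, d]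

/-- The nucleus `N = {1, a, b, c, d}`. -/
def nucleus : Set (Perm V) := {1, a, b, c, d}

/-- The recursive specification of the functions `[ξ] : G → 𝔽₂` for `ξ ∈ {b,c,d}`:
`[ξ](g) = 1` if `g = ξ`; `[ξ](g) = 0` if `g ∈ N` but `g ≠ ξ`; and otherwise
`[ξ](g) = [ξ^τ](g|₀) + [ξ^τ](g|₁)`. -/
def XiSpec (F : Fin 3 → ↥G → ZMod 2) : Prop :=
  ∀ (i : Fin 3) (g : ↥G),
    ((g : Perm V) = genBCD i → F i g = 1) ∧
    ((g : Perm V) ∈ nucleus → (g : Perm V) ≠ genBCD i → F i g = 0) ∧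
    ((g : Perm V) ∉ nucleus →
      ∀ s₀ s₁ : ↥G, hasState ↑g [false] ↑s₀ → hasState ↑g [true] ↑s₁ →
        F i g = F (i + 1) s₀ + F (i + 1) s₁)

namespace TT

inductive L | A | B | C | D
deriving DecidableEq

open L

/-- evaluation of a letter as a generator -/
def evalL : L → Perm V
  | A => a | B => b | C => c | D => d

/-- evaluation of a word -/
def evalW : List L → Perm V
  | [] => 1
  | l :: w => evalL l * evalW w

/-- action of a letter on the first level -/
def actL : L → Bool → Bool
  | A, x => !x
  | _, x => x

/-- state (section) of a letter at a first-level vertex, as a word -/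
def stL : L → Bool → List L
  | A, _ => []
  | B, false => [C] | B, true => [A]
  | C, false => [A] | C, true => [D]
  | D, false => [] | D, true => [B]

/-- action of a word on the first level -/
def actW : List L → Bool → Bool
  | [], x => x
  | l :: w, x => actL l (actW w x)

/-- state of a word at a first-level vertex -/
def stW : List L → Bool → List L
  | [], _ => []
  | l :: w, x => stL l (actW w x) ++ stW w x

/-- cyclic shift τ on the letters B, C, D -/
def nxt : L → L
  | A => A | B => C | C => D | D => B

/-- number of non-A letters -/
def mm (w : List L) : ℕ := w.count B + w.count C + w.count D

theorem mm_append (u v : List L) : mm (u ++ v) = mm u + mm v := by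
  simp [mm, List.count_append]; ring

theorem evalW_append (u v : List L) : evalW (u ++ v) = evalW u * evalW v := by
  induction u with
  | nil => simp [evalW]
  | cons l u ih => simp [evalW, ih, mul_assoc]

theorem evalL_sq (l : L) : evalL l * evalL l = 1 := by
  cases l <;> refine Equiv.ext fun v => ?_ <;>
    simp [evalL, Perm.mul_apply, actA_invol v, actB_invol v, actC_invol v, actD_invol v]

theorem evalW_reverse (w : List L) : evalW w.reverse = (evalW w)⁻¹ := by
  induction w with
  | nil => simp [evalW]
  | cons l w ih =>
    rw [List.reverse_cons, evalW_append, ih]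
    have h1 : evalW [l] = evalL l := by simp [evalW]
    have h2 : (evalL l)⁻¹ = evalL l := inv_eq_of_mul_eq_one_right (evalL_sq l)
    rw [h1, show evalW (l :: w) = evalL l * evalW w from rfl, mul_inv_rev, h2]

theorem evalL_mem (l : L) : evalL l ∈ G := by
  cases l
  exacts [a_mem_G, b_mem_G, c_mem_G, d_mem_G]

theorem evalW_mem (w : List L) : evalW w ∈ G := by
  induction w with
  | nil => exact one_mem G
  | cons l w ih => exact mul_mem (evalL_mem l) ih

theorem exists_word {g : Perm V} (hg : g ∈ G) : ∃ w : List L, evalW w = g := by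
  refine Subgroup.closure_induction (fun x hx => ?_) ⟨[], rfl⟩
    (fun x y _ _ hx hy => ?_) (fun x _ hx => ?_) hg
  · simp only [Set.mem_insert_iff, Set.mem_singleton_iff] at hx
    rcases hx with h|h|h|h
    exacts [⟨[A], by simp [evalW, evalL, h]⟩, ⟨[B], by simp [evalW, evalL, h]⟩,
      ⟨[C], by simp [evalW, evalL, h]⟩, ⟨[D], by simp [evalW, evalL, h]⟩]
  · obtain ⟨u, hu⟩ := hx
    obtain ⟨v, hv⟩ := hy
    exact ⟨u ++ v, by rw [evalW_append, hu, hv]⟩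
  · obtain ⟨u, hu⟩ := hx
    exact ⟨u.reverse, by rw [evalW_reverse, hu]⟩

theorem evalL_cons (l : L) (y : Bool) (u : V) :
    evalL l (y :: u) = actL l y :: evalW (stL l y) u := by
  cases l <;> cases y <;>
    simp [evalL, actL, stL, evalW, actA, actB, actC, actD, Perm.mul_apply]

/-- The master self-similarity lemma. -/
theorem evalW_cons (w : List L) (x : Bool) (v : V) :
    evalW w (x :: v) = actW w x :: evalW (stW w x) v := by
  induction w with
  | nil => simp [evalW, actW, stW]
  | cons l w ih =>
    show (evalL l * evalW w) (x :: v) = _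
    rw [Perm.mul_apply, ih, evalL_cons]
    show _ = actL l (actW w x) :: evalW (stL l (actW w x) ++ stW w x) v
    rw [evalW_append, Perm.mul_apply]

theorem evalL_nil (l : L) : evalL l ([] : V) = [] := by cases l <;> rfl

theorem evalW_nil (w : List L) : evalW w ([] : V) = [] := by
  induction w with
  | nil => rfl
  | cons l w ih =>
    show (evalL l * evalW w) ([] : V) = []
    rw [Perm.mul_apply, ih, evalL_nil]

theorem hasState_stW (w : List L) (x : Bool) :
    hasState (evalW w) [x] (evalW (stW w x)) := by
  intro v
  have h2 : evalW w [x] = [actW w x] := by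
    have h3 := evalW_cons w x []
    rwa [evalW_nil] at h3
  rw [show ([x] ++ v : V) = x :: v from rfl, evalW_cons w x v, h2]
  rfl

theorem hasState_unique {g : Perm V} {v : V} {s s' : Perm V}
    (h : hasState g v s) (h' : hasState g v s') : s = s' :=
  Equiv.ext fun u => List.append_cancel_left ((h u).symm.trans (h' u))

theorem actL_not (l : L) (x : Bool) : actL l (!x) = !(actL l x) := by
  cases l <;> cases x <;> rfl

theorem actW_not (w : List L) (x : Bool) : actW w (!x) = !(actW w x) := by
  induction w with
  | nil => rfl
  | cons l w ih =>
    show actL l (actW w (!x)) = !(actL l (actW w x))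
    rw [ih, actL_not]

theorem eval_one_stW {w : List L} (h : evalW w = 1) (x : Bool) : evalW (stW w x) = 1 := by
  refine Equiv.ext fun v => ?_
  have h1 := evalW_cons w x v
  rw [h, Perm.one_apply] at h1
  injection h1 with _ h3
  rw [Perm.one_apply, ← h3]

end TT
namespace TT
open L

theorem stL_count_nxt (l l' : L) (p : Bool) (hl : l ≠ A) :
    (stL l' p).count (nxt l) + (stL l' (!p)).count (nxt l) = [l'].count l := by
  cases l with
  | A => exact absurd rfl hl
  | B => cases l' <;> cases p <;> decide
  | C => cases l' <;> cases p <;> decide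
  | D => cases l' <;> cases p <;> decide

/-- counts of the shifted letter in the two states sum to the count in the word -/
theorem count_stW (l : L) (hl : l ≠ A) (w : List L) :
    (stW w false).count (nxt l) + (stW w true).count (nxt l) = w.count l := by
  induction w with
  | nil => rfl
  | cons l' w ih =>
    show (stL l' (actW w false) ++ stW w false).count (nxt l)
        + (stL l' (actW w true) ++ stW w true).count (nxt l) = (l' :: w).count l
    have ht : actW w true = !(actW w false) := by
      rw [show (true : Bool) = !false from rfl, actW_not]
    rw [ht, List.count_append, List.count_append,
      show l' :: w = [l'] ++ w from rfl, List.count_append]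
    have h1 := stL_count_nxt l l' (actW w false) hl
    omega

theorem mm_stW (w : List L) : mm (stW w false) + mm (stW w true) = mm w := by
  have hb := count_stW B (by simp) w
  have hc := count_stW C (by simp) w
  have hd := count_stW D (by simp) w
  simp only [nxt] at hb hc hd
  simp only [mm]
  omega

theorem count_le_mm (l : L) (hl : l ≠ A) (u : List L) : u.count l ≤ mm u := by
  cases l with
  | A => exact absurd rfl hl
  | B => simp only [mm]; omega
  | C => simp only [mm]; omega
  | D => simp only [mm]; omega

theorem stL_countA_mm (l' : L) (p : Bool) :
    (stL l' p).count A + mm (stL l' p) ≤ mm [l'] := by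
  cases l' <;> cases p <;> decide

/-- the H' inequality: A-count plus non-A-count of a state is at most mm of the word -/
theorem countA_mm_stW (w : List L) (x : Bool) :
    (stW w x).count A + mm (stW w x) ≤ mm w := by
  induction w with
  | nil => exact Nat.le_refl 0
  | cons l' w ih =>
    show (stL l' (actW w x) ++ stW w x).count A + mm (stL l' (actW w x) ++ stW w x)
        ≤ mm ([l'] ++ w)
    rw [List.count_append, mm_append, mm_append]
    have h1 := stL_countA_mm l' (actW w x)
    omega

theorem noA_actW {u : List L} (hA : u.count A = 0) (x : Bool) : actW u x = x := by
  induction u with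
  | nil => rfl
  | cons l u ih =>
    rw [List.count_cons] at hA
    have h1 : u.count A = 0 := by omega
    have h2 : l ≠ A := by rintro rfl; simp at hA
    show actL l (actW u x) = x
    rw [ih h1]
    cases l <;> first | rfl | exact absurd rfl h2

theorem count_cons_ne {l l' : L} (h : l' ≠ l) (u : List L) :
    (l' :: u).count l = u.count l := by
  rw [List.count_cons, if_neg (by simpa using h), add_zero]

theorem count_cons_eq (l : L) (u : List L) : (l :: u).count l = u.count l + 1 := by
  rw [List.count_cons, if_pos (by simp)]

/-- structure of a hog at `false` for A-free words: only `B` letters are active -/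
theorem hog_false_struct {u : List L} (hA : u.count A = 0) :
    mm (stW u false) + u.count C + u.count D ≤ mm u := by
  induction u with
  | nil => exact Nat.le_refl 0
  | cons l' u ih =>
    rw [List.count_cons] at hA
    have h1 : u.count A = 0 := by omega
    have h2 : l' ≠ A := by rintro rfl; simp at hA
    have ih1 := ih h1
    show mm (stL l' (actW u false) ++ stW u false) + (l' :: u).count C + (l' :: u).count D
        ≤ mm ([l'] ++ u)
    rw [noA_actW h1, mm_append, mm_append]
    have hc := List.count_cons (a := C) (b := l') (l := u)  -- wrong arg order? will fix
    cases l' with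
    | A => exact absurd rfl h2
    | B =>
      rw [count_cons_ne (by simp) u, count_cons_ne (by simp) u]
      have : mm (stL B false) ≤ mm [B] := by decide
      omega
    | C =>
      rw [count_cons_eq, count_cons_ne (by simp) u]
      have : mm (stL C false) + 1 ≤ mm [C] := by decide
      omega
    | D =>
      rw [count_cons_ne (by simp) u, count_cons_eq]
      have : mm (stL D false) + 1 ≤ mm [D] := by decide
      omega

/-- structure of a hog at `true` for A-free words: `B` letters are inactive -/
theorem hog_true_struct {u : List L} (hA : u.count A = 0) :
    mm (stW u true) + u.count B ≤ mm u := by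
  induction u with
  | nil => exact Nat.le_refl 0
  | cons l' u ih =>
    rw [List.count_cons] at hA
    have h1 : u.count A = 0 := by omega
    have h2 : l' ≠ A := by rintro rfl; simp at hA
    have ih1 := ih h1
    show mm (stL l' (actW u true) ++ stW u true) + (l' :: u).count B ≤ mm ([l'] ++ u)
    rw [noA_actW h1, mm_append, mm_append]
    cases l' with
    | A => exact absurd rfl h2
    | B =>
      rw [count_cons_eq]
      have : mm (stL B true) + 1 ≤ mm [B] := by decide
      omega
    | C =>
      rw [count_cons_ne (by simp) u]
      have : mm (stL C true) ≤ mm [C] := by decide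
      omega
    | D =>
      rw [count_cons_ne (by simp) u]
      have : mm (stL D true) ≤ mm [D] := by decide
      omega

/-- the state at `true` of an A-free, B-free word is C-free -/
theorem hog_true_noC {u : List L} (hA : u.count A = 0) (hB : u.count B = 0) :
    (stW u true).count C = 0 := by
  induction u with
  | nil => rfl
  | cons l' u ih =>
    rw [List.count_cons] at hA hB
    have h1 : u.count A = 0 := by omega
    have h1b : u.count B = 0 := by omega
    have h2 : l' ≠ A := by rintro rfl; simp at hA
    have h2b : l' ≠ B := by rintro rfl; simp at hB
    show (stL l' (actW u true) ++ stW u true).count C = 0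
    rw [noA_actW h1, List.count_append, ih h1 h1b]
    cases l' with
    | A => exact absurd rfl h2
    | B => exact absurd rfl h2b
    | C => rfl
    | D => rfl

end TT
namespace TT
open L

theorem a_sq : a * a = 1 := evalL_sq A
theorem b_sq : b * b = 1 := evalL_sq B
theorem d_sq : d * d = 1 := evalL_sq D

theorem b_ne_one : b ≠ 1 := by
  intro h
  have h1 : actB [true, false] = [true, false] := by
    rw [← coe_b, h]; rfl
  simp [actB, actA] at h1

theorem d_ne_one : d ≠ 1 := by
  intro h
  have h1 : actD [true, true, false] = [true, true, false] := by
    rw [← coe_d, h]; rfl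
  simp [actD, actB, actA] at h1

theorem mm_zero_eval {u : List L} (h : mm u = 0) : evalW u = 1 ∨ evalW u = a := by
  induction u with
  | nil => exact Or.inl rfl
  | cons l u ih =>
    simp only [mm] at h ih
    rw [List.count_cons, List.count_cons, List.count_cons] at h
    have h1 : u.count B + u.count C + u.count D = 0 := by omega
    have h2 : l = A := by
      cases l
      · rfl
      · exfalso; simp at h; try omega
      · exfalso; simp at h; try omega
      · exfalso; simp at h; try omega
    subst h2
    show evalL A * evalW u = 1 ∨ evalL A * evalW u = a
    rcases ih h1 with h3 | h3 <;> rw [h3]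
    · right; exact mul_one a
    · left; exact a_sq

theorem allB_eval {u : List L} (hA : u.count A = 0) (hC : u.count C = 0)
    (hD : u.count D = 0) : evalW u = 1 ∨ evalW u = b := by
  induction u with
  | nil => exact Or.inl rfl
  | cons l u ih =>
    rw [List.count_cons] at hA hC hD
    have h1 : u.count A = 0 := by omega
    have h2 : u.count C = 0 := by omega
    have h3 : u.count D = 0 := by omega
    have h4 : l = B := by
      cases l
      · exfalso; simp at hA
      · rfl
      · exfalso; simp at hC
      · exfalso; simp at hD
    subst h4
    show evalL B * evalW u = 1 ∨ evalL B * evalW u = b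
    rcases ih h1 h2 h3 with h5 | h5 <;> rw [h5]
    · right; exact mul_one b
    · left; exact b_sq

theorem allD_eval {u : List L} (hA : u.count A = 0) (hB : u.count B = 0)
    (hC : u.count C = 0) : evalW u = 1 ∨ evalW u = d := by
  induction u with
  | nil => exact Or.inl rfl
  | cons l u ih =>
    rw [List.count_cons] at hA hB hC
    have h1 : u.count A = 0 := by omega
    have h2 : u.count B = 0 := by omega
    have h3 : u.count C = 0 := by omega
    have h4 : l = D := by
      cases l
      · exfalso; simp at hA
      · exfalso; simp at hB
      · exfalso; simp at hC
      · rfl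
    subst h4
    show evalL D * evalW u = 1 ∨ evalL D * evalW u = d
    rcases ih h1 h2 h3 with h5 | h5 <;> rw [h5]
    · right; exact mul_one d
    · left; exact d_sq

/-- parity-refined version for all-B words -/
theorem allB_full {u : List L} (hA : u.count A = 0) (hC : u.count C = 0)
    (hD : u.count D = 0) :
    (2 ∣ u.count B ∧ evalW u = 1) ∨ (¬ 2 ∣ u.count B ∧ evalW u = b) := by
  induction u with
  | nil => exact Or.inl ⟨Dvd.intro 0 rfl, rfl⟩
  | cons l u ih =>
    rw [List.count_cons] at hA hC hD
    have h1 : u.count A = 0 := by omega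
    have h2 : u.count C = 0 := by omega
    have h3 : u.count D = 0 := by omega
    have h4 : l = B := by
      cases l
      · exfalso; simp at hA
      · rfl
      · exfalso; simp at hC
      · exfalso; simp at hD
    subst h4
    rw [count_cons_eq]
    have hev : evalW (B :: u) = b * evalW u := rfl
    rcases ih h1 h2 h3 with ⟨h5, h6⟩ | ⟨h5, h6⟩
    · right
      refine ⟨by omega, ?_⟩
      rw [hev, h6, mul_one]
    · left
      refine ⟨by omega, ?_⟩
      rw [hev, h6, b_sq]

theorem allB_parity {u : List L} (hA : u.count A = 0) (hC : u.count C = 0)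
    (hD : u.count D = 0) (hev : evalW u = 1) : 2 ∣ u.count B := by
  rcases allB_full hA hC hD with ⟨h, -⟩ | ⟨-, h⟩
  · exact h
  · exact absurd (h.symm.trans hev) b_ne_one

theorem allD_full {u : List L} (hA : u.count A = 0) (hB : u.count B = 0)
    (hC : u.count C = 0) :
    (2 ∣ u.count D ∧ evalW u = 1) ∨ (¬ 2 ∣ u.count D ∧ evalW u = d) := by
  induction u with
  | nil => exact Or.inl ⟨Dvd.intro 0 rfl, rfl⟩
  | cons l u ih =>
    rw [List.count_cons] at hA hB hC
    have h1 : u.count A = 0 := by omega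
    have h2 : u.count B = 0 := by omega
    have h3 : u.count C = 0 := by omega
    have h4 : l = D := by
      cases l
      · exfalso; simp at hA
      · exfalso; simp at hB
      · exfalso; simp at hC
      · rfl
    subst h4
    rw [count_cons_eq]
    have hev : evalW (D :: u) = d * evalW u := rfl
    rcases ih h1 h2 h3 with ⟨h5, h6⟩ | ⟨h5, h6⟩
    · right
      refine ⟨by omega, ?_⟩
      rw [hev, h6, mul_one]
    · left
      refine ⟨by omega, ?_⟩
      rw [hev, h6, d_sq]

theorem allD_parity {u : List L} (hA : u.count A = 0) (hB : u.count B = 0)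
    (hC : u.count C = 0) (hev : evalW u = 1) : 2 ∣ u.count D := by
  rcases allD_full hA hB hC with ⟨h, -⟩ | ⟨-, h⟩
  · exact h
  · exact absurd (h.symm.trans hev) d_ne_one

end TT
namespace TT
open L

theorem nxt_ne_A {l : L} (h : l ≠ A) : nxt l ≠ A := by
  cases l with
  | A => exact absurd rfl h
  | B => decide
  | C => decide
  | D => decide

/-- kernel lemma, third level: A-free and C-free words -/
theorem kernel_afree2 (n : ℕ)
    (IH : ∀ m, m < n → ∀ w : List L, mm w ≤ m → evalW w = 1 → ∀ l, l ≠ A → 2 ∣ w.count l)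
    (u : List L) (hu : mm u ≤ n) (hA : u.count A = 0) (hC : u.count C = 0)
    (hev : evalW u = 1) (l : L) (hl : l ≠ A) : 2 ∣ u.count l := by
  have hsplit := mm_stW u
  have hcnt := count_stW l hl u
  have hnA : nxt l ≠ A := nxt_ne_A hl
  by_cases h0 : mm (stW u false) < mm u
  · by_cases h1 : mm (stW u true) < mm u
    · have d0 := IH (mm (stW u false)) (lt_of_lt_of_le h0 hu) (stW u false) le_rfl
        (eval_one_stW hev false) (nxt l) hnA
      have d1 := IH (mm (stW u true)) (lt_of_lt_of_le h1 hu) (stW u true) le_rfl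
        (eval_one_stW hev true) (nxt l) hnA
      omega
    · -- hog at true ⇒ u.count B = 0 ⇒ u is all-D
      have hB : u.count B = 0 := by have := hog_true_struct hA; omega
      have hD := allD_parity hA hB hC hev
      cases l with
      | A => exact absurd rfl hl
      | B => omega
      | C => omega
      | D => omega
  · -- hog at false ⇒ u.count C = u.count D = 0 ⇒ u is all-B
    have hCD : u.count C = 0 ∧ u.count D = 0 := by have := hog_false_struct hA; omega
    have hB := allB_parity hA hCD.1 hCD.2 hev
    cases l with
    | A => exact absurd rfl hl
    | B => omega
    | C => omega
    | D => omega

/-- kernel lemma, second level: A-free words -/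
theorem kernel_afree (n : ℕ)
    (IH : ∀ m, m < n → ∀ w : List L, mm w ≤ m → evalW w = 1 → ∀ l, l ≠ A → 2 ∣ w.count l)
    (u : List L) (hu : mm u ≤ n) (hA : u.count A = 0)
    (hev : evalW u = 1) (l : L) (hl : l ≠ A) : 2 ∣ u.count l := by
  have hsplit := mm_stW u
  have hcnt := count_stW l hl u
  have hnA : nxt l ≠ A := nxt_ne_A hl
  by_cases h0 : mm (stW u false) < mm u
  · by_cases h1 : mm (stW u true) < mm u
    · have d0 := IH (mm (stW u false)) (lt_of_lt_of_le h0 hu) (stW u false) le_rfl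
        (eval_one_stW hev false) (nxt l) hnA
      have d1 := IH (mm (stW u true)) (lt_of_lt_of_le h1 hu) (stW u true) le_rfl
        (eval_one_stW hev true) (nxt l) hnA
      omega
    · -- hog at true
      have e1 : mm (stW u true) = mm u := by omega
      have hB : u.count B = 0 := by have := hog_true_struct hA; omega
      have hA2 : (stW u true).count A = 0 := by have := countA_mm_stW u true; omega
      have hC2 : (stW u true).count C = 0 := hog_true_noC hA hB
      have d1 := kernel_afree2 n IH (stW u true) (by omega) hA2 hC2
        (eval_one_stW hev true) (nxt l) hnA
      have d0 : (stW u false).count (nxt l) = 0 := by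
        have := count_le_mm (nxt l) hnA (stW u false); omega
      omega
  · -- hog at false ⇒ all-B
    have hCD : u.count C = 0 ∧ u.count D = 0 := by have := hog_false_struct hA; omega
    have hB := allB_parity hA hCD.1 hCD.2 hev
    cases l with
    | A => exact absurd rfl hl
    | B => omega
    | C => omega
    | D => omega

/-- The kernel lemma: a word evaluating to the identity has even count
of each of the letters B, C, D. -/
theorem kernel : ∀ (n : ℕ) (w : List L), mm w ≤ n → evalW w = 1 →
    ∀ l, l ≠ A → 2 ∣ w.count l := by
  intro n
  induction n using Nat.strong_induction_on with
  | _ n IH =>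
  intro w hw hev l hl
  have hsplit := mm_stW w
  have hcnt := count_stW l hl w
  have hnA : nxt l ≠ A := nxt_ne_A hl
  by_cases h0 : mm (stW w false) < mm w
  · by_cases h1 : mm (stW w true) < mm w
    · have d0 := IH (mm (stW w false)) (lt_of_lt_of_le h0 hw) (stW w false) le_rfl
        (eval_one_stW hev false) (nxt l) hnA
      have d1 := IH (mm (stW w true)) (lt_of_lt_of_le h1 hw) (stW w true) le_rfl
        (eval_one_stW hev true) (nxt l) hnA
      omega
    · -- hog at true
      have hA2 : (stW w true).count A = 0 := by have := countA_mm_stW w true; omega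
      have d1 := kernel_afree n IH (stW w true) (by omega) hA2
        (eval_one_stW hev true) (nxt l) hnA
      have d0 : (stW w false).count (nxt l) = 0 := by
        have := count_le_mm (nxt l) hnA (stW w false); omega
      omega
  · -- hog at false
    have hA2 : (stW w false).count A = 0 := by have := countA_mm_stW w false; omega
    have d0 := kernel_afree n IH (stW w false) (by omega) hA2
      (eval_one_stW hev false) (nxt l) hnA
    have d1 : (stW w true).count (nxt l) = 0 := by
      have := count_le_mm (nxt l) hnA (stW w true); omega
    omega

theorem kernel' {w : List L} (hev : evalW w = 1) {l : L} (hl : l ≠ A) : 2 ∣ w.count l :=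
  kernel (mm w) w le_rfl hev l hl

end TT
namespace TT
open L

def letter : Fin 3 → L := ![B, C, D]

theorem letter_ne_A : ∀ i : Fin 3, letter i ≠ A := by decide

theorem letter_succ : ∀ i : Fin 3, letter (i + 1) = nxt (letter i) := by decide

theorem evalW_letter (i : Fin 3) : evalW [letter i] = genBCD i := by
  fin_cases i <;> simp [letter, genBCD, evalW, evalL]

theorem gen_sq (i : Fin 3) : genBCD i * genBCD i = 1 := by
  fin_cases i <;> simp only [genBCD, Matrix.cons_val_zero, Matrix.cons_val_one,
    Matrix.head_cons, Matrix.cons_val_two, Matrix.tail_cons]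
  exacts [b_sq, show c * c = 1 from evalL_sq C, d_sq]

theorem zmod2_cancel {x y : ℕ} (h : 2 ∣ x + y) : (x : ZMod 2) = (y : ZMod 2) := by
  have hxy : x % 2 = y % 2 := by omega
  calc (x : ZMod 2) = ((x % 2 : ℕ) : ZMod 2) := (ZMod.natCast_mod x 2).symm
    _ = ((y % 2 : ℕ) : ZMod 2) := by rw [hxy]
    _ = y := ZMod.natCast_mod y 2

theorem zmod2_zero {x : ℕ} (h : 2 ∣ x) : (x : ZMod 2) = 0 := by
  simpa using zmod2_cancel (by simpa using h : 2 ∣ x + 0)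

theorem zmod2_one {x : ℕ} (h : 2 ∣ x + 1) : (x : ZMod 2) = 1 := by
  simpa using zmod2_cancel h

theorem count_gen (u : List L) (j : Fin 3) (h : evalW u = genBCD j) :
    (u.count (letter j) : ZMod 2) = 1 := by
  have h1 : evalW (u ++ [letter j]) = 1 := by
    rw [evalW_append, evalW_letter, h, gen_sq]
  have h2 := kernel' h1 (letter_ne_A j)
  rw [List.count_append, show [letter j].count (letter j) = 1 by simp] at h2
  exact zmod2_one h2

theorem count_nucleus (u : List L) (hN : evalW u ∈ nucleus) (j : Fin 3)
    (hne : evalW u ≠ genBCD j) : (u.count (letter j) : ZMod 2) = 0 := by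
  have key : ∀ w₀ : List L, evalW (u ++ w₀) = 1 → w₀.count (letter j) = 0 →
      (u.count (letter j) : ZMod 2) = 0 := by
    intro w₀ h1 h0
    have h2 := kernel' h1 (letter_ne_A j)
    rw [List.count_append, h0, add_zero] at h2
    exact zmod2_zero h2
  simp only [nucleus, Set.mem_insert_iff, Set.mem_singleton_iff] at hN
  rcases hN with h|h|h|h|h
  · exact key [] (by rw [List.append_nil, h]) rfl
  · refine key [A] (by rw [evalW_append, h, show evalW [A] = a by simp [evalW, evalL], a_sq])
      (List.count_eq_zero.mpr (by simp [letter_ne_A j]))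
  · have hj : letter j ≠ B := by
      intro hb
      exact hne (by rw [h, ← evalW_letter j, hb]; simp [evalW, evalL])
    refine key [B] (by rw [evalW_append, h, show evalW [B] = b by simp [evalW, evalL], b_sq])
      (List.count_eq_zero.mpr (by simp [hj]))
  · have hj : letter j ≠ C := by
      intro hb
      exact hne (by rw [h, ← evalW_letter j, hb]; simp [evalW, evalL])
    refine key [C] (by rw [evalW_append, h, show evalW [C] = c by simp [evalW, evalL],
        show c * c = 1 from evalL_sq C]) (List.count_eq_zero.mpr (by simp [hj]))
  · have hj : letter j ≠ D := by
      intro hb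
      exact hne (by rw [h, ← evalW_letter j, hb]; simp [evalW, evalL])
    refine key [D] (by rw [evalW_append, h, show evalW [D] = d by simp [evalW, evalL], d_sq])
      (List.count_eq_zero.mpr (by simp [hj]))

/-- the value of any function satisfying the specification, on nucleus elements,
is the count of the corresponding letter in any representing word -/
theorem val_nucleus (F : Fin 3 → ↥G → ZMod 2) (hF : XiSpec F)
    (u : List L) (hN : evalW u ∈ nucleus) (j : Fin 3) (g : ↥G)
    (hg : (g : Perm V) = evalW u) : F j g = (u.count (letter j) : ZMod 2) := by
  by_cases hx : (g : Perm V) = genBCD j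
  · rw [(hF j g).1 hx, count_gen u j (hg.symm.trans hx)]
  · rw [(hF j g).2.1 (show (g : Perm V) ∈ nucleus by rw [hg]; exact hN) hx,
      count_nucleus u hN j (fun hh => hx (hg.trans hh))]

/-- the candidate function: count of the letter in a chosen representing word -/
noncomputable def Fc (i : Fin 3) (g : ↥G) : ZMod 2 :=
  ((Classical.choose (exists_word g.prop)).count (letter i) : ZMod 2)

theorem Fc_eq (i : Fin 3) (g : ↥G) (w : List L) (hw : evalW w = ↑g) :
    Fc i g = (w.count (letter i) : ZMod 2) := by
  have hs := Classical.choose_spec (exists_word g.prop)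
  have h1 : evalW (w ++ (Classical.choose (exists_word g.prop)).reverse) = 1 := by
    rw [evalW_append, evalW_reverse, hs, hw, mul_inv_cancel]
  have h2 := kernel' h1 (letter_ne_A i)
  rw [List.count_append, List.count_reverse] at h2
  exact (zmod2_cancel h2).symm

theorem Fc_spec : XiSpec Fc := by
  intro i g
  obtain ⟨w, hw⟩ := exists_word g.prop
  refine ⟨fun hx => ?_, fun hN hne => ?_, fun hN s0 s1 hs0 hs1 => ?_⟩
  · rw [Fc_eq i g w hw, count_gen w i (hw.trans hx)]
  · rw [Fc_eq i g w hw,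
      count_nucleus w (by rw [hw]; exact hN) i (fun hh => hne ((hw.symm.trans hh)))]
  · rw [← hw] at hs0 hs1
    have h0 : (s0 : Perm V) = evalW (stW w false) :=
      hasState_unique hs0 (hasState_stW w false)
    have h1 : (s1 : Perm V) = evalW (stW w true) :=
      hasState_unique hs1 (hasState_stW w true)
    rw [Fc_eq i g w hw, Fc_eq (i+1) s0 (stW w false) h0.symm,
      Fc_eq (i+1) s1 (stW w true) h1.symm, ← Nat.cast_add, letter_succ,
      count_stW (letter i) (letter_ne_A i) w]

end TT
namespace TT
open L

theorem expand (F : Fin 3 → ↥G → ZMod 2) (hF : XiSpec F) (u : List L) (i : Fin 3) (g : ↥G)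
    (hg : (g : Perm V) = evalW u) (hN : (g : Perm V) ∉ nucleus) :
    F i g = F (i+1) ⟨evalW (stW u false), evalW_mem _⟩
      + F (i+1) ⟨evalW (stW u true), evalW_mem _⟩ := by
  refine (hF i g).2.2 hN ⟨evalW (stW u false), evalW_mem _⟩
    ⟨evalW (stW u true), evalW_mem _⟩ ?_ ?_
  · show hasState (g : Perm V) [false] (evalW (stW u false))
    rw [hg]; exact hasState_stW u false
  · show hasState (g : Perm V) [true] (evalW (stW u true))
    rw [hg]; exact hasState_stW u true

theorem count_split (u : List L) (i : Fin 3) :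
    (u.count (letter i) : ZMod 2) = ((stW u false).count (letter (i+1)) : ZMod 2)
      + ((stW u true).count (letter (i+1)) : ZMod 2) := by
  rw [← Nat.cast_add, letter_succ, count_stW (letter i) (letter_ne_A i) u]

theorem nucleus_one : (1 : Perm V) ∈ nucleus := by simp [nucleus]
theorem nucleus_a : a ∈ nucleus := by simp [nucleus]
theorem nucleus_b : b ∈ nucleus := by simp [nucleus]
theorem nucleus_d : d ∈ nucleus := by simp [nucleus]

/-- uniqueness, third level: A-free and C-free words -/
theorem uniq_afree2 (F : Fin 3 → ↥G → ZMod 2) (hF : XiSpec F) (n : ℕ)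
    (IH : ∀ m, m < n → ∀ w : List L, mm w ≤ m → ∀ (i : Fin 3) (g : ↥G),
      (g : Perm V) = evalW w → F i g = (w.count (letter i) : ZMod 2))
    (u : List L) (hu : mm u ≤ n) (hA : u.count A = 0) (hC : u.count C = 0)
    (i : Fin 3) (g : ↥G) (hg : (g : Perm V) = evalW u) :
    F i g = (u.count (letter i) : ZMod 2) := by
  by_cases hN : evalW u ∈ nucleus
  · exact val_nucleus F hF u hN i g hg
  · have hgN : (g : Perm V) ∉ nucleus := by rw [hg]; exact hN
    have hsplit := mm_stW u
    rw [expand F hF u i g hg hgN, count_split u i]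
    by_cases h0 : mm (stW u false) < mm u
    · by_cases h1 : mm (stW u true) < mm u
      · rw [IH _ (lt_of_lt_of_le h0 hu) (stW u false) le_rfl (i+1) _ rfl,
          IH _ (lt_of_lt_of_le h1 hu) (stW u true) le_rfl (i+1) _ rfl]
      · exfalso
        have hB : u.count B = 0 := by have := hog_true_struct hA; omega
        rcases allD_full hA hB hC with ⟨-, h⟩ | ⟨-, h⟩ <;> rw [h] at hN
        exacts [hN nucleus_one, hN nucleus_d]
    · exfalso
      have hCD : u.count C = 0 ∧ u.count D = 0 := by have := hog_false_struct hA; omega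
      rcases allB_full hA hCD.1 hCD.2 with ⟨-, h⟩ | ⟨-, h⟩ <;> rw [h] at hN
      exacts [hN nucleus_one, hN nucleus_b]

/-- uniqueness, second level: A-free words -/
theorem uniq_afree (F : Fin 3 → ↥G → ZMod 2) (hF : XiSpec F) (n : ℕ)
    (IH : ∀ m, m < n → ∀ w : List L, mm w ≤ m → ∀ (i : Fin 3) (g : ↥G),
      (g : Perm V) = evalW w → F i g = (w.count (letter i) : ZMod 2))
    (u : List L) (hu : mm u ≤ n) (hA : u.count A = 0)
    (i : Fin 3) (g : ↥G) (hg : (g : Perm V) = evalW u) :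
    F i g = (u.count (letter i) : ZMod 2) := by
  by_cases hN : evalW u ∈ nucleus
  · exact val_nucleus F hF u hN i g hg
  · have hgN : (g : Perm V) ∉ nucleus := by rw [hg]; exact hN
    have hsplit := mm_stW u
    rw [expand F hF u i g hg hgN, count_split u i]
    by_cases h0 : mm (stW u false) < mm u
    · by_cases h1 : mm (stW u true) < mm u
      · rw [IH _ (lt_of_lt_of_le h0 hu) (stW u false) le_rfl (i+1) _ rfl,
          IH _ (lt_of_lt_of_le h1 hu) (stW u true) le_rfl (i+1) _ rfl]
      · -- hog at true
        have hB : u.count B = 0 := by have := hog_true_struct hA; omega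
        have hmm0 : mm (stW u false) = 0 := by omega
        have hN0 : evalW (stW u false) ∈ nucleus := by
          rcases mm_zero_eval hmm0 with h | h <;> rw [h]
          exacts [nucleus_one, nucleus_a]
        have hA2 : (stW u true).count A = 0 := by have := countA_mm_stW u true; omega
        have hC2 : (stW u true).count C = 0 := hog_true_noC hA hB
        rw [val_nucleus F hF (stW u false) hN0 (i+1) _ rfl,
          uniq_afree2 F hF n IH (stW u true) (by omega) hA2 hC2 (i+1) _ rfl]
    · exfalso
      have hCD : u.count C = 0 ∧ u.count D = 0 := by have := hog_false_struct hA; omega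
      rcases allB_full hA hCD.1 hCD.2 with ⟨-, h⟩ | ⟨-, h⟩ <;> rw [h] at hN
      exacts [hN nucleus_one, hN nucleus_b]

/-- uniqueness: any function satisfying the specification is given by letter counts -/
theorem uniq_main (F : Fin 3 → ↥G → ZMod 2) (hF : XiSpec F) :
    ∀ (n : ℕ) (w : List L), mm w ≤ n → ∀ (i : Fin 3) (g : ↥G),
      (g : Perm V) = evalW w → F i g = (w.count (letter i) : ZMod 2) := by
  intro n
  induction n using Nat.strong_induction_on with
  | _ n IH =>
  intro w hw i g hg
  by_cases hN : evalW w ∈ nucleus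
  · exact val_nucleus F hF w hN i g hg
  · have hgN : (g : Perm V) ∉ nucleus := by rw [hg]; exact hN
    have hsplit := mm_stW w
    rw [expand F hF w i g hg hgN, count_split w i]
    by_cases h0 : mm (stW w false) < mm w
    · by_cases h1 : mm (stW w true) < mm w
      · rw [IH _ (lt_of_lt_of_le h0 hw) (stW w false) le_rfl (i+1) _ rfl,
          IH _ (lt_of_lt_of_le h1 hw) (stW w true) le_rfl (i+1) _ rfl]
      · -- hog at true
        have hmm0 : mm (stW w false) = 0 := by omega
        have hN0 : evalW (stW w false) ∈ nucleus := by
          rcases mm_zero_eval hmm0 with h | h <;> rw [h]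
          exacts [nucleus_one, nucleus_a]
        have hA2 : (stW w true).count A = 0 := by have := countA_mm_stW w true; omega
        rw [val_nucleus F hF (stW w false) hN0 (i+1) _ rfl,
          uniq_afree F hF n IH (stW w true) (by omega) hA2 (i+1) _ rfl]
    · -- hog at false
      have hmm1 : mm (stW w true) = 0 := by omega
      have hN1 : evalW (stW w true) ∈ nucleus := by
        rcases mm_zero_eval hmm1 with h | h <;> rw [h]
        exacts [nucleus_one, nucleus_a]
      have hA2 : (stW w false).count A = 0 := by have := countA_mm_stW w false; omega
      rw [uniq_afree F hF n IH (stW w false) (by omega) hA2 (i+1) _ rfl,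
        val_nucleus F hF (stW w true) hN1 (i+1) _ rfl]

theorem uniq_final (F : Fin 3 → ↥G → ZMod 2) (hF : XiSpec F) (i : Fin 3) (g : ↥G)
    (w : List L) (hw : evalW w = (g : Perm V)) :
    F i g = (w.count (letter i) : ZMod 2) :=
  uniq_main F hF (mm w) w le_rfl i g hw.symm

end TT

/-- **Lemma.** The functions `[b], [c], [d] : G → 𝔽₂` are well defined (the recursion
determines unique functions), and each is a group homomorphism to `(𝔽₂, +)`. -/
theorem stmt15 :
    (∃! F : Fin 3 → ↥G → ZMod 2, XiSpec F) ∧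
    (∀ F : Fin 3 → ↥G → ZMod 2, XiSpec F →
      ∀ (i : Fin 3) (g h : ↥G), F i (g * h) = F i g + F i h) := by
  constructor
  · refine ⟨TT.Fc, TT.Fc_spec, ?_⟩
    intro F hF
    funext i g
    obtain ⟨w, hw⟩ := TT.exists_word g.prop
    rw [TT.uniq_final F hF i g w hw, TT.Fc_eq i g w hw]
  · intro F hF i g h
    obtain ⟨wg, hwg⟩ := TT.exists_word g.prop
    obtain ⟨wh, hwh⟩ := TT.exists_word h.prop
    have hgh : TT.evalW (wg ++ wh) = ((g * h : ↥G) : Perm V) := by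
      rw [TT.evalW_append, hwg, hwh]; rfl
    rw [TT.uniq_final F hF i (g*h) _ hgh, TT.uniq_final F hF i g wg hwg,
      TT.uniq_final F hF i h wh hwh, List.count_append, Nat.cast_add]
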